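/- In the algebra U with K = f_{q^{1/2}}, the elements H = (2/(q^{-2}−q²))(K⁴ − 1), X = q^{-1/2} F K, Y = q^{-1/2} K E satisfy: q²HX − q^{-2}XH = 2X, q^{-2}HY − q²YH = −2Y, and q^{-1}XY − qYX = ((q+q^{-1})/2) H. -/

import Mathlib

lemma swap_pow {A : Type*} [Ring A] [Algebra ℂ A] (a : ℂ) (K F : A)
    (h : K * F = a • (F * K)) : ∀ n : ℕ, K ^ n * F = a ^ n • (F * K ^ n) := by
  intro n
  induction n with
  | zero => simp
  | succ n ih =>
    calc K ^ (n+1) * F = K ^ n * (K * F) := by rw [pow_succ, mul_assoc]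
      _ = a • (K ^ n * F * K) := by rw [h, mul_smul_comm, mul_assoc]
      _ = a • ((a ^ n • (F * K ^ n)) * K) := by rw [ih]
      _ = a ^ (n+1) • (F * K ^ (n+1)) := by
          rw [smul_mul_assoc, smul_smul, mul_assoc, ← pow_succ, ← pow_succ']

set_option maxHeartbeats 1000000 in
theorem stmt14 {A : Type*} [Ring A] [Algebra ℂ A]
    (q s : ℂ) (hs : s ^ 2 = q) (hq0 : q ≠ 0)
    (hroot : ∀ n : ℕ, 0 < n → q ^ n ≠ 1)
    (E F K K' : A)
    (hKK' : K * K' = 1) (hK'K : K' * K = 1)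
    (hKE : K * E = q • (E * K)) (hKF : K * F = q⁻¹ • (F * K))
    (hEF : E * F - F * E = (q - q⁻¹)⁻¹ • (K ^ 2 - K' ^ 2)) :
    let H := (2 * ((q ^ 2)⁻¹ - q ^ 2)⁻¹) • (K ^ 4 - 1)
    let X := s⁻¹ • (F * K)
    let Y := s⁻¹ • (K * E)
    (q ^ 2) • (H * X) - (q ^ 2)⁻¹ • (X * H) = (2 : ℂ) • X ∧
    (q ^ 2)⁻¹ • (H * Y) - (q ^ 2) • (Y * H) = (-2 : ℂ) • Y ∧
    q⁻¹ • (X * Y) - q • (Y * X) = ((q + q⁻¹) / 2) • H := by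
  intro H X Y
  subst hs
  have hs0 : s ≠ 0 := by
    intro h; apply hq0; rw [h]; ring
  have h8 : (1 : ℂ) - s ^ 8 ≠ 0 := fun h => hroot 4 (by norm_num) (by linear_combination -h)
  have h8' : (s : ℂ) ^ 8 - 1 ≠ 0 := fun h => h8 (by linear_combination -h)
  have h4' : (s : ℂ) ^ 4 - 1 ≠ 0 := fun h => hroot 2 (by norm_num) (by linear_combination h)
  have h4'' : (1 : ℂ) - s ^ 4 ≠ 0 := fun h => h4' (by linear_combination -h)
  have h88 : (1 : ℂ) - (s ^ 2) ^ 2 * (s ^ 2) ^ 2 ≠ 0 := fun h => h8 (by linear_combination h)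
  have hD : -s ^ 2 + s ^ 6 ≠ 0 := fun h => (mul_ne_zero (pow_ne_zero 2 hs0) h4') (by linear_combination h)
  have hd3 : s ^ 2 - (s ^ 2)⁻¹ ≠ 0 := by
    intro h
    apply h4'
    field_simp at h
    linear_combination h
  have hd4 : ((s ^ 2) ^ 2)⁻¹ - (s ^ 2) ^ 2 ≠ 0 := by
    intro h
    apply h8
    field_simp at h
    linear_combination h
  have hu : -s ^ 2 + s ^ 6 ≠ 0 := fun h => (mul_ne_zero (pow_ne_zero 2 hs0) h4') (by linear_combination h)
  have hv : s ^ 2 * 2 - s ^ 10 * 2 ≠ 0 := fun h => (mul_ne_zero (mul_ne_zero two_ne_zero (pow_ne_zero 2 hs0)) h8) (by linear_combination h)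
  have hA : s - s ^ 9 ≠ 0 := fun h => (mul_ne_zero hs0 h8) (by linear_combination h)
  have hB : s ^ 5 - s ^ 13 ≠ 0 := fun h => (mul_ne_zero (pow_ne_zero 5 hs0) h8) (by linear_combination h)
  have hC : s ^ 9 - s ^ 17 ≠ 0 := fun h => (mul_ne_zero (pow_ne_zero 9 hs0) h8) (by linear_combination h)
  -- key commutation facts
  have h4F : K ^ 4 * F = ((s^2)⁻¹) ^ 4 • (F * K ^ 4) := swap_pow (s^2)⁻¹ K F hKF 4
  have h5E : K ^ 5 * E = (s^2) ^ 5 • (E * K ^ 5) := swap_pow (s^2) K E hKE 5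
  have h2E : K ^ 2 * E = (s^2) ^ 2 • (E * K ^ 2) := swap_pow (s^2) K E hKE 2
  have e1 : (K ^ 4 - 1) * (F * K) = ((s^2)⁻¹) ^ 4 • (F * K ^ 5) - F * K := by
    rw [sub_mul, one_mul, ← mul_assoc, h4F, smul_mul_assoc, mul_assoc, ← pow_succ]
  have e2 : (F * K) * (K ^ 4 - 1) = F * K ^ 5 - F * K := by
    rw [mul_sub, mul_one, mul_assoc, ← pow_succ']
  have e1' : (K ^ 4 - 1) * (K * E) = (s^2) ^ 5 • (E * K ^ 5) - K * E := by
    rw [sub_mul, one_mul, ← mul_assoc, ← pow_succ, h5E]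
  have e2' : (K * E) * (K ^ 4 - 1) = (s^2) • (E * K ^ 5) - K * E := by
    rw [mul_sub, mul_one, hKE, smul_mul_assoc, mul_assoc, ← pow_succ']
  have hKFK : K * (F * K) = (s^2)⁻¹ • (F * K ^ 2) := by
    rw [← mul_assoc, hKF, smul_mul_assoc, mul_assoc, ← pow_two]
  have e3 : (F * K) * (K * E) = (s^2) ^ 2 • (F * (E * K ^ 2)) := by
    calc (F * K) * (K * E) = F * (K ^ 2 * E) := by
          rw [mul_assoc, ← mul_assoc K K E, ← pow_two]
      _ = (s^2) ^ 2 • (F * (E * K ^ 2)) := by rw [h2E, mul_smul_comm]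
  have e4 : (K * E) * (F * K) = ((s^2) * (s^2)⁻¹) • (E * (F * K ^ 2)) := by
    rw [hKE, smul_mul_assoc, mul_assoc, hKFK, mul_smul_comm, smul_smul]
  have hK'2 : K' ^ 2 * K ^ 2 = 1 := by
    rw [pow_two, pow_two, mul_assoc, ← mul_assoc K' K K, hK'K, one_mul, hK'K]
  have key : F * (E * K ^ 2) - E * (F * K ^ 2) = ((s^2) - (s^2)⁻¹)⁻¹ • ((1 : A) - K ^ 4) := by
    have h1 : F * (E * K ^ 2) - E * (F * K ^ 2) = -((E * F - F * E) * K ^ 2) := by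
      noncomm_ring
    rw [h1, hEF, smul_mul_assoc, ← smul_neg]
    congr 1
    rw [sub_mul, hK'2, neg_sub]
    congr 1
    rw [← pow_add]
  have key2 : E * (F * K ^ 2) = F * (E * K ^ 2) - ((s^2) - (s^2)⁻¹)⁻¹ • ((1 : A) - K ^ 4) := by
    rw [← key]; abel
  refine ⟨?_, ?_, ?_⟩
  · simp only [H, X]
    rw [smul_mul_assoc, mul_smul_comm, e1, smul_mul_assoc, mul_smul_comm, e2]
    match_scalars
    · field_simp [hA, hB, hC, h88]
      ring
    · field_simp [hA, hB, hC, h88]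
      ring
  · simp only [H, Y]
    rw [smul_mul_assoc, mul_smul_comm, e1', smul_mul_assoc, mul_smul_comm, e2']
    match_scalars
    · field_simp [hA, hB, hC, h88]
      ring
    · field_simp [hA, hB, hC, h88]
      ring
  · simp only [X, Y]
    rw [smul_mul_assoc, mul_smul_comm, e3, smul_mul_assoc, mul_smul_comm, e4, key2]
    match_scalars
    · field_simp
      ring
    · field_simp [h4'']
      ring
    · clear_value H X Y
      clear key key2 e1 e2 e1' e2' e3 e4 h4F h5E h2E hKFK hK'2 hKE hKF hEF hKK' hK'K H X Y
      clear hroot hu hv hA hB hC h88 hD h8' h4'' hq0 E F K K'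
      field_simp
      ring_nf
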